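/- Let X and Y be sets and R ⊆ X × Y a relation whose indicator χ_R has the double limit property. Let 𝒰_X and 𝒰_Y be the sets of ultrafilters on C_X(R) and C_Y(R) respectively. Then the function χ : 𝒰_X × 𝒰_Y → ℝ given by χ(U,V) = 1 if d_U ∈ V and χ(U,V) = 0 otherwise has the double limit property. -/

import Mathlib

open Filter Topology

/-- A Boolean algebra of sets on `X`: contains `∅` and `univ`, closed under
finite unions, finite intersections and complements. -/
def IsBoolAlg {X : Type*} (C : Set (Set X)) : Prop :=
  ∅ ∈ C ∧ Set.univ ∈ C ∧
    (∀ A ∈ C, ∀ B ∈ C, A ∪ B ∈ C) ∧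
    (∀ A ∈ C, ∀ B ∈ C, A ∩ B ∈ C) ∧
    (∀ A ∈ C, Aᶜ ∈ C)

/-- An ultrafilter on a Boolean algebra of sets `C`. -/
def IsUltraOn {X : Type*} (C : Set (Set X)) (U : Set (Set X)) : Prop :=
  U ⊆ C ∧ ∅ ∉ U ∧ Set.univ ∈ U ∧
    (∀ A ∈ U, ∀ B ∈ U, A ∩ B ∈ U) ∧
    (∀ A ∈ U, ∀ B ∈ C, A ⊆ B → B ∈ U) ∧
    (∀ A ∈ C, A ∈ U ∨ Aᶜ ∈ U)

/-- A finitely additive probability measure on `C`. -/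
def IsFAP {X : Type*} (C : Set (Set X)) (μ : Set X → ℝ) : Prop :=
  (∀ A ∈ C, 0 ≤ μ A) ∧ μ Set.univ = 1 ∧
    (∀ A ∈ C, ∀ B ∈ C, A ∩ B = ∅ → μ (A ∪ B) = μ A + μ B)

/-- `μ` is strongly continuous on `C`: for every `ε > 0` there is a finite
partition of `X` into members of `C`, each of measure `< ε`. -/
def StrongCont {X : Type*} (C : Set (Set X)) (μ : Set X → ℝ) : Prop :=
  ∀ ε : ℝ, 0 < ε → ∃ (n : ℕ) (F : Fin n → Set X),
    (∀ i, F i ∈ C) ∧ (⋃ i, F i) = Set.univ ∧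
    (∀ i j, i ≠ j → F i ∩ F j = ∅) ∧ ∀ i, μ (F i) < ε

/-- `μ` is `{0,1}`-valued on `C`. -/
def ZeroOneValued {X : Type*} (C : Set (Set X)) (μ : Set X → ℝ) : Prop :=
  ∀ A ∈ C, μ A = 0 ∨ μ A = 1

/-- A 2-tree in `C`: an injective map from finite binary strings into `C` such
that children are strictly below their parent and the two children of a node
are disjoint. -/
def IsTwoTree {X : Type*} (C : Set (Set X)) (t : List Bool → Set X) : Prop :=
  Function.Injective t ∧ (∀ s, t s ∈ C) ∧
    (∀ s b, t (s ++ [b]) ⊂ t s) ∧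
    ∀ s, t (s ++ [false]) ∩ t (s ++ [true]) = ∅

/-- The double limit property for `f : A × B → ℝ`: whenever both iterated
limits along sequences exist, they are equal. -/
def DLP {A B : Type*} (f : A → B → ℝ) : Prop :=
  ∀ (a : ℕ → A) (b : ℕ → B) (u v : ℕ → ℝ) (L L' : ℝ),
    (∀ i, Tendsto (fun j => f (a i) (b j)) atTop (𝓝 (u i))) →
    Tendsto u atTop (𝓝 L) →
    (∀ j, Tendsto (fun i => f (a i) (b j)) atTop (𝓝 (v j))) →
    Tendsto v atTop (𝓝 L') → L = L'

-- The indicator `χ_R` of a relation `R ⊆ X × Y`.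
open Classical in
noncomputable def chi {X Y : Type*} (R : Set (X × Y)) : X → Y → ℝ :=
  fun a b => if (a, b) ∈ R then 1 else 0

/-- The Boolean algebra of sets generated by `S`. -/
def genAlg {X : Type*} (S : Set (Set X)) : Set (Set X) :=
  ⋂₀ {C : Set (Set X) | IsBoolAlg C ∧ S ⊆ C}

/-- `C_X(R)`: the Boolean algebra on `X` generated by the columns of `R`. -/
def colAlg {X Y : Type*} (R : Set (X × Y)) : Set (Set X) :=
  genAlg {A | ∃ b : Y, A = {x : X | (x, b) ∈ R}}

/-- `C_Y(R)`: the Boolean algebra on `Y` generated by the rows of `R`. -/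
def rowAlg {X Y : Type*} (R : Set (X × Y)) : Set (Set Y) :=
  genAlg {B | ∃ a : X, B = {y : Y | (a, y) ∈ R}}

/-- `d_U = {b ∈ Y : {x : (x,b) ∈ R} ∈ U}`. -/
def dSet {X Y : Type*} (R : Set (X × Y)) (U : Set (Set X)) : Set Y :=
  {b : Y | {x : X | (x, b) ∈ R} ∈ U}

/-- `e_V = {a ∈ X : {y : (a,y) ∈ R} ∈ V}`. -/
def eSet {X Y : Type*} (R : Set (X × Y)) (V : Set (Set Y)) : Set X :=
  {a : X | {y : Y | (a, y) ∈ R} ∈ V}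

/-- Membership in `conv_δ(Z)`: a nonnegative, countably supported weight
function summing to `1`. -/
def IsConvDelta {Z : Type*} (p : Z → ℝ) : Prop :=
  (∀ z, 0 ≤ p z) ∧ (Function.support p).Countable ∧ HasSum p 1

/-- `f_c(p, q) = ∑_{(x,y)} p(x) q(y) f(x,y)`. -/
noncomputable def fc {X Y : Type*} (f : X → Y → ℝ) (p : X → ℝ) (q : Y → ℝ) : ℝ :=
  ∑' z : X × Y, p z.1 * q z.2 * f z.1 z.2

/-- The `k`-order property for a relation `R ⊆ X × Y`. -/
def HasKOrderProp {X Y : Type*} (R : Set (X × Y)) (k : ℕ) : Prop :=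
  ∃ (a : Fin k → X) (b : Fin k → Y), ∀ i j, (a i, b j) ∈ R ↔ i < j

-- The pairing `χ(U, V)` on ultrafilters: `1` if `d_U ∈ V`, else `0`.
open Classical in
noncomputable def chiU {X Y : Type*} (R : Set (X × Y))
    (U : {U : Set (Set X) // IsUltraOn (colAlg R) U})
    (V : {V : Set (Set Y) // IsUltraOn (rowAlg R) V}) : ℝ :=
  if dSet R U.1 ∈ V.1 then 1 else 0

/-- `𝓕` shatters the finite set `S`. -/
def ShattersSet {X : Type*} (F : Set (Set X)) (S : Finset X) : Prop :=
  ∀ T ⊆ S, ∃ A ∈ F, A ∩ ↑S = (↑T : Set X)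

/-- An atomic probability measure on `X`. -/
def IsAtomicMeasure {X : Type*} (μ : Set X → ℝ) : Prop :=
  ∃ (I : Set ℕ) (x : ℕ → X) (r : ℕ → ℝ),
    (∀ i ∈ I, 0 ≤ r i) ∧ HasSum (fun i : I => r (i : ℕ)) 1 ∧
    ∀ A : Set X, μ A = ∑' i : {i : ℕ // i ∈ I ∧ x i ∈ A}, r (i : ℕ)

section AuxDLP

open Filter

private noncomputable def recAux {α : Type*} [Nonempty α] (F : (ℕ → α) → ℕ → α) : ℕ → ℕ → α
  | 0 => fun _ => Classical.arbitrary α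
  | n + 1 => Function.update (recAux F n) n (F (recAux F n) n)

private noncomputable def recSeq {α : Type*} [Nonempty α] (F : (ℕ → α) → ℕ → α) (k : ℕ) : α :=
  F (recAux F k) k

private lemma recAux_eq {α : Type*} [Nonempty α] (F : (ℕ → α) → ℕ → α) :
    ∀ m k, k < m → recAux F m k = recSeq F k := by
  intro m
  induction m with
  | zero => omega
  | succ n ih =>
    intro k hk
    rcases Nat.lt_succ_iff_lt_or_eq.1 hk with h | h
    · rw [recAux, Function.update_of_ne (by omega)]
      exact ih k h
    · subst h; rw [recAux, Function.update_self]; rfl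

private lemma core_half_graph {X Y : Type*} {R : Set (X × Y)} (h : DLP (chi R))
    (UU : Ultrafilter X) (VV : Ultrafilter Y) (T : Set X) (S : Set Y)
    (hT : T ∈ UU) (hS : S ∈ VV)
    (hcol : ∀ b ∈ S, {x : X | (x, b) ∈ R} ∈ UU)
    (hrow : ∀ a ∈ T, {y : Y | (a, y) ∈ R} ∉ VV) : False := by
  classical
  have hneX : Nonempty X := ⟨(Filter.nonempty_of_mem (f := (UU : Filter X)) hT).some⟩
  have hneY : Nonempty Y := ⟨(Filter.nonempty_of_mem (f := (VV : Filter Y)) hS).some⟩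
  set A : (ℕ → X × Y) → ℕ → Set (X × Y) := fun p k =>
    {q | q.1 ∈ T ∧ (∀ l < k, (q.1, (p l).2) ∈ R) ∧ q.2 ∈ S ∧
      (∀ l < k, ((p l).1, q.2) ∉ R) ∧ (q.1, q.2) ∉ R} with hA
  set F : (ℕ → X × Y) → ℕ → X × Y := fun p k =>
    if h : (A p k).Nonempty then h.some else Classical.arbitrary _ with hF
  set g : ℕ → X × Y := recSeq F with hg
  have key : ∀ k, g k ∈ A (recAux F k) k := by
    intro k
    induction k using Nat.strong_induction_on with
    | _ k ih =>
      have hprev : ∀ l, l < k → recAux F k l = g l := fun l hl => recAux_eq F k l hl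
      have hx2 : ∀ l, l < k → (g l).1 ∈ T ∧ (g l).2 ∈ S :=
        fun l hl => ⟨(ih l hl).1, (ih l hl).2.2.1⟩
      have hAx : (T ∩ ⋂ l ∈ Set.Iio k, {x : X | (x, (g l).2) ∈ R}) ∈ UU := by
        refine Filter.inter_mem hT ?_
        rw [Filter.biInter_mem (Set.finite_Iio k)]
        exact fun l hl => hcol _ (hx2 l hl).2
      obtain ⟨x, hx⟩ := Filter.nonempty_of_mem (f := (UU : Filter X)) hAx
      have hxT : x ∈ T := hx.1
      have hxcol : ∀ l, l < k → (x, (g l).2) ∈ R := by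
        have := hx.2
        simp only [Set.mem_iInter, Set.mem_Iio, Set.mem_setOf_eq] at this
        exact this
      have hAy : (S ∩ ((⋂ l ∈ Set.Iio k, {y : Y | ((g l).1, y) ∈ R}ᶜ) ∩
          {y : Y | (x, y) ∈ R}ᶜ)) ∈ VV := by
        refine Filter.inter_mem hS (Filter.inter_mem ?_ ?_)
        · rw [Filter.biInter_mem (Set.finite_Iio k)]
          exact fun l hl => Ultrafilter.compl_mem_iff_notMem.2 (hrow _ (hx2 l hl).1)
        · exact Ultrafilter.compl_mem_iff_notMem.2 (hrow x hxT)
      obtain ⟨y, hy⟩ := Filter.nonempty_of_mem (f := (VV : Filter Y)) hAy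
      have hyS : y ∈ S := hy.1
      have hyrow : ∀ l, l < k → ((g l).1, y) ∉ R := by
        have := hy.2.1
        simp only [Set.mem_iInter, Set.mem_Iio, Set.mem_compl_iff, Set.mem_setOf_eq] at this
        exact this
      have hyx : (x, y) ∉ R := hy.2.2
      have hne : (A (recAux F k) k).Nonempty := by
        refine ⟨(x, y), hxT, ?_, hyS, ?_, hyx⟩
        · intro l hl; rw [hprev l hl]; exact hxcol l hl
        · intro l hl; rw [hprev l hl]; exact hyrow l hl
      show F (recAux F k) k ∈ A (recAux F k) k
      rw [hF]
      simp only []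
      rw [dif_pos hne]
      exact hne.some_mem
  have hR1 : ∀ l k, l < k → ((g k).1, (g l).2) ∈ R := by
    intro l k hl
    have := (key k).2.1 l hl
    rwa [recAux_eq F k l hl] at this
  have hR0 : ∀ k l, k ≤ l → ((g k).1, (g l).2) ∉ R := by
    intro k l hkl
    rcases eq_or_lt_of_le hkl with rfl | hlt
    · exact (key k).2.2.2.2
    · have := (key l).2.2.2.1 k hlt
      rwa [recAux_eq F l k hlt] at this
  have ht1 : ∀ k, Tendsto (fun l => chi R (g k).1 (g l).2) atTop (𝓝 0) := by
    intro k
    apply Tendsto.congr' _ tendsto_const_nhds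
    filter_upwards [eventually_ge_atTop k] with l hl
    simp only [chi]
    rw [if_neg (hR0 k l hl)]
  have ht2 : ∀ l, Tendsto (fun k => chi R (g k).1 (g l).2) atTop (𝓝 1) := by
    intro l
    apply Tendsto.congr' _ tendsto_const_nhds
    filter_upwards [eventually_ge_atTop (l + 1)] with k hk
    simp only [chi]
    rw [if_pos (hR1 l k hk)]
  exact absurd (h (fun k => (g k).1) (fun l => (g l).2) (fun _ => 0) (fun _ => 1) 0 1
    ht1 tendsto_const_nhds ht2 tendsto_const_nhds) (by norm_num)

end AuxDLP
section AuxSym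

open Filter

private lemma chi_compl {X Y : Type*} (R : Set (X × Y)) (a : X) (b : Y) :
    chi Rᶜ a b = 1 - chi R a b := by
  simp only [chi, Set.mem_compl_iff]
  by_cases hab : (a, b) ∈ R <;> simp [hab]

private lemma dlp_compl {X Y : Type*} {R : Set (X × Y)} (h : DLP (chi R)) : DLP (chi Rᶜ) := by
  intro a b u v L L' h1 h2 h3 h4
  have e1 : ∀ i, Tendsto (fun j => chi R (a i) (b j)) atTop (𝓝 (1 - u i)) := by
    intro i
    have := (tendsto_const_nhds (x := (1:ℝ)) (f := atTop (α := ℕ))).sub (h1 i)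
    refine this.congr fun j => ?_
    rw [chi_compl]; ring
  have e3 : ∀ j, Tendsto (fun i => chi R (a i) (b j)) atTop (𝓝 (1 - v j)) := by
    intro j
    have := (tendsto_const_nhds (x := (1:ℝ)) (f := atTop (α := ℕ))).sub (h3 j)
    refine this.congr fun i => ?_
    rw [chi_compl]; ring
  have := h a b (fun i => 1 - u i) (fun j => 1 - v j) (1 - L) (1 - L') e1
    ((tendsto_const_nhds (x := (1:ℝ))).sub h2) e3 ((tendsto_const_nhds (x := (1:ℝ))).sub h4)
  linarith

private lemma core_half_graph' {X Y : Type*} {R : Set (X × Y)} (h : DLP (chi R))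
    (UU : Ultrafilter X) (VV : Ultrafilter Y) (T : Set X) (S : Set Y)
    (hT : T ∈ UU) (hS : S ∈ VV)
    (hcol : ∀ b ∈ S, {x : X | (x, b) ∈ R} ∉ UU)
    (hrow : ∀ a ∈ T, {y : Y | (a, y) ∈ R} ∈ VV) : False := by
  refine core_half_graph (dlp_compl h) UU VV T S hT hS (fun b hb => ?_) (fun a ha => ?_)
  · have : {x : X | (x, b) ∈ Rᶜ} = {x : X | (x, b) ∈ R}ᶜ := rfl
    rw [this]
    exact Ultrafilter.compl_mem_iff_notMem.2 (hcol b hb)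
  · have : {y : Y | (a, y) ∈ Rᶜ} = {y : Y | (a, y) ∈ R}ᶜ := rfl
    rw [this]
    exact fun hc => (Ultrafilter.compl_mem_iff_notMem.1 hc) (hrow a ha)

/-- The key symmetry: `d_U ∈ V ↔ e_V ∈ U` for genuine ultrafilters, given DLP. -/
private lemma ultra_symm {X Y : Type*} {R : Set (X × Y)} (h : DLP (chi R))
    (UU : Ultrafilter X) (VV : Ultrafilter Y) :
    {b : Y | {x : X | (x, b) ∈ R} ∈ UU} ∈ VV ↔ {a : X | {y : Y | (a, y) ∈ R} ∈ VV} ∈ UU := by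
  constructor
  · intro h1
    by_contra h2
    refine core_half_graph h UU VV {a : X | {y : Y | (a, y) ∈ R} ∈ VV}ᶜ
      {b : Y | {x : X | (x, b) ∈ R} ∈ UU} (Ultrafilter.compl_mem_iff_notMem.2 h2) h1
      (fun b hb => hb) (fun a ha => ha)
  · intro h1
    by_contra h2
    refine core_half_graph' h UU VV {a : X | {y : Y | (a, y) ∈ R} ∈ VV}
      {b : Y | {x : X | (x, b) ∈ R} ∈ UU}ᶜ h1 (Ultrafilter.compl_mem_iff_notMem.2 h2)
      (fun b hb => hb) (fun a ha => ha)

end AuxSym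
section AuxExt

open Filter

private lemma mem_genAlg_of_mem {X : Type*} {S : Set (Set X)} {A : Set X} (hA : A ∈ S) :
    A ∈ genAlg S :=
  Set.mem_sInter.2 fun _ hC => hC.2 hA

private lemma compl_mem_genAlg {X : Type*} {S : Set (Set X)} {A : Set X}
    (hA : A ∈ genAlg S) : Aᶜ ∈ genAlg S :=
  Set.mem_sInter.2 fun C hC => hC.1.2.2.2.2 A (Set.mem_sInter.1 hA C hC)

private lemma exists_ultra_ext {X : Type*} {C U : Set (Set X)} (hU : IsUltraOn C U) :
    ∃ UU : Ultrafilter X, ∀ A ∈ C, (A ∈ U ↔ A ∈ UU) := by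
  obtain ⟨hUC, hne, huniv, hinter, hup, hdec⟩ := hU
  have hsInter : ∀ t : Set (Set X), t.Finite → t ⊆ U → ⋂₀ t ∈ U := by
    intro t htf
    refine Set.Finite.induction_on (motive := fun s _ => s ⊆ U → ⋂₀ s ∈ U) t htf
      (fun _ => by simpa using huniv) ?_ 
    intro A s hAs hsf ih hins
    rw [Set.sInter_insert]
    exact hinter _ (hins (Set.mem_insert _ _)) _
      (ih fun B hB => hins (Set.mem_insert_of_mem _ hB))
  have hfin : ∀ t : Set (Set X), t ⊆ U → t.Finite → (⋂₀ t).Nonempty := by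
    intro t htU htf
    rcases Set.eq_empty_or_nonempty (⋂₀ t) with he | hne'
    · exact absurd (he ▸ hsInter t htf htU) hne
    · exact hne'
  have hNB : (Filter.generate U).NeBot := Filter.generate_neBot_iff.2 hfin
  refine ⟨Ultrafilter.of (Filter.generate U), fun A hAC => ?_⟩
  constructor
  · intro hAU
    exact Ultrafilter.of_le (Filter.generate U) (Filter.mem_generate_of_mem hAU)
  · intro hAU
    by_contra hAU'
    rcases hdec A hAC with hh | hh
    · exact hAU' hh
    · exact Ultrafilter.compl_mem_iff_notMem.1
        (Ultrafilter.of_le (Filter.generate U) (Filter.mem_generate_of_mem hh)) hAU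

end AuxExt
section AuxMain

open Filter

private lemma eventually_eq_of_tendsto_01 {f : ℕ → ℝ} {c : ℝ}
    (hv : ∀ n, f n = 0 ∨ f n = 1) (hf : Tendsto f atTop (𝓝 c)) :
    ∀ᶠ n in atTop, f n = c := by
  have hev : ∀ᶠ n in atTop, f n ∈ Set.Ioo (c - 1/2) (c + 1/2) :=
    hf (Ioo_mem_nhds (by linarith) (by linarith))
  have hc : c ∈ ({0, 1} : Set ℝ) := by
    refine ((Set.finite_singleton (1:ℝ)).insert 0).isClosed.mem_of_tendsto hf ?_
    exact Eventually.of_forall fun n => by rcases hv n with e | e <;> simp [e]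
  simp only [Set.mem_insert_iff, Set.mem_singleton_iff] at hc
  filter_upwards [hev] with n hn
  rcases hc with rfl | rfl
  · rcases hv n with e | e
    · exact e
    · exfalso; rw [e] at hn; have := hn.2; norm_num at this
  · rcases hv n with e | e
    · exfalso; rw [e] at hn; have := hn.1; norm_num at this
    · exact e

private lemma mem_ultra_bind {α β : Type*} {W : Ultrafilter α} {m : α → Ultrafilter β}
    {s : Set β} : s ∈ W.bind m ↔ {n | s ∈ m n} ∈ W :=
  Filter.mem_bind'

end AuxMain
/-- if the indicator of `R` has the double limit property, then so
does the pairing `χ(U, V)` on ultrafilters on `C_X(R)` and `C_Y(R)`. -/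
theorem ultrafilter_pairing_dlp {X Y : Type*} (R : Set (X × Y))
    (h : DLP (chi R)) : DLP (chiU R) := by
  classical
  intro a b u v L L' hu huL hv hvL
  by_contra hne
  -- `chiU` is `{0,1}`-valued
  have hval : ∀ U V, chiU R U V = 0 ∨ chiU R U V = 1 := by
    intro U V; unfold chiU; split <;> simp
  -- limits of `{0,1}`-valued sequences are eventually attained
  have hu1 : ∀ᶠ i in atTop, u i = L := by
    refine eventually_eq_of_tendsto_01 (fun i => ?_) huL
    have hev := eventually_eq_of_tendsto_01 (fun j => hval (a i) (b j)) (hu i)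
    obtain ⟨j, hj⟩ := hev.exists
    rcases hval (a i) (b j) with e | e <;> rw [hj] at e <;> [exact Or.inl e; exact Or.inr e]
  have hv1 : ∀ᶠ j in atTop, v j = L' := by
    refine eventually_eq_of_tendsto_01 (fun j => ?_) hvL
    have hev := eventually_eq_of_tendsto_01 (fun i => hval (a i) (b j)) (hv j)
    obtain ⟨i, hi⟩ := hev.exists
    rcases hval (a i) (b j) with e | e <;> rw [hi] at e <;> [exact Or.inl e; exact Or.inr e]
  have hL01 : L = 0 ∨ L = 1 := by
    obtain ⟨i, hi⟩ := hu1.exists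
    have hev := eventually_eq_of_tendsto_01 (fun j => hval (a i) (b j)) (hu i)
    obtain ⟨j, hj⟩ := hev.exists
    rcases hval (a i) (b j) with e | e <;> rw [hj, hi] at e <;> [exact Or.inl e; exact Or.inr e]
  have hL'01 : L' = 0 ∨ L' = 1 := by
    obtain ⟨j, hj⟩ := hv1.exists
    have hev := eventually_eq_of_tendsto_01 (fun i => hval (a i) (b j)) (hv j)
    obtain ⟨i, hi⟩ := hev.exists
    rcases hval (a i) (b j) with e | e <;> rw [hi, hj] at e <;> [exact Or.inl e; exact Or.inr e]
  -- extend the ultrafilters on the algebras to genuine ultrafilters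
  choose UU hUU using fun i => exists_ultra_ext (a i).2
  choose VV hVV using fun j => exists_ultra_ext (b j).2
  have hDeq : ∀ i, dSet R (a i).1 = {b' : Y | {x : X | (x, b') ∈ R} ∈ UU i} :=
    fun i => Set.ext fun b' => hUU i {x : X | (x, b') ∈ R} (mem_genAlg_of_mem ⟨b', rfl⟩)
  -- transfer of `chiU` values to the genuine ultrafilters
  have hone : ∀ i j, chiU R (a i) (b j) = 1 →
      {b' : Y | {x : X | (x, b') ∈ R} ∈ UU i} ∈ VV j := by
    intro i j hij
    have hd : dSet R (a i).1 ∈ (b j).1 := by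
      by_contra hc; unfold chiU at hij; rw [if_neg hc] at hij; norm_num at hij
    rw [← hDeq i]
    exact (hVV j _ ((b j).2.1 hd)).1 hd
  have hrowalg : ∀ i j, chiU R (a i) (b j) = 1 → dSet R (a i).1 ∈ rowAlg R := by
    intro i j hij
    have hd : dSet R (a i).1 ∈ (b j).1 := by
      by_contra hc; unfold chiU at hij; rw [if_neg hc] at hij; norm_num at hij
    exact (b j).2.1 hd
  have hzero : ∀ i j, chiU R (a i) (b j) = 0 → dSet R (a i).1 ∈ rowAlg R →
      {b' : Y | {x : X | (x, b') ∈ R} ∈ UU i} ∉ VV j := by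
    intro i j hij hrAlg
    have hd : dSet R (a i).1 ∉ (b j).1 := by
      intro hc; unfold chiU at hij; rw [if_pos hc] at hij; norm_num at hij
    have hcomp : (dSet R (a i).1)ᶜ ∈ VV j :=
      (hVV j _ (compl_mem_genAlg hrAlg)).1 (((b j).2.2.2.2.2.2 _ hrAlg).resolve_left hd)
    rw [← hDeq i]
    exact Ultrafilter.compl_mem_iff_notMem.1 hcomp
  -- the hyperfilter machinery
  have hWcof : ∀ {s : Set ℕ}, (∀ᶠ n in atTop, n ∈ s) → s ∈ Filter.hyperfilter ℕ := by
    intro s hs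
    rw [← Nat.cofinite_eq_atTop] at hs
    exact Filter.hyperfilter_le_cofinite hs
  have hWinf : ∀ {s : Set ℕ}, s ∈ Filter.hyperfilter ℕ → ∀ N : ℕ, ∃ n ∈ s, N ≤ n := by
    intro s hs N
    by_contra hc
    push_neg at hc
    exact ((Set.finite_Iio N).subset fun n hn => hc n hn).notMem_hyperfilter hs
  have SY := fun (P : Ultrafilter X) (Q : Ultrafilter Y) => ultra_symm h P Q
  -- the two cases
  rcases hL01 with hL | hL <;> rcases hL'01 with hL' | hL'
  · exact hne (hL.trans hL'.symm)
  · -- L = 0, L' = 1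
    obtain ⟨I₀, hI₀⟩ := eventually_atTop.1 hu1
    obtain ⟨J₀, hJ₀⟩ := eventually_atTop.1 hv1
    -- row-algebra membership for large i, via column `b J₀`
    have hvJ : Tendsto (fun i => chiU R (a i) (b J₀)) atTop (𝓝 1) := by
      have := hv J₀; rwa [hJ₀ J₀ le_rfl, hL'] at this
    obtain ⟨I₁', hI₁'⟩ :=
      eventually_atTop.1 (eventually_eq_of_tendsto_01 (fun i => hval (a i) (b J₀)) hvJ)
    set I₁ := max I₀ I₁' with hI₁
    have hralg : ∀ i, I₁ ≤ i → dSet R (a i).1 ∈ rowAlg R :=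
      fun i hi => hrowalg i J₀ (hI₁' i (le_trans (le_max_right _ _) hi))
    have hNeg : ∀ i, I₁ ≤ i → ∀ᶠ j in atTop,
        {b' : Y | {x : X | (x, b') ∈ R} ∈ UU i} ∉ VV j := by
      intro i hi
      have h0 : Tendsto (fun j => chiU R (a i) (b j)) atTop (𝓝 0) := by
        have := hu i; rwa [hI₀ i (le_trans (le_max_left _ _) hi), hL] at this
      filter_upwards [eventually_eq_of_tendsto_01 (fun j => hval (a i) (b j)) h0] with j hj
      exact hzero i j hj (hralg i hi)
    have hPos : ∀ j, J₀ ≤ j → ∀ᶠ i in atTop,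
        {b' : Y | {x : X | (x, b') ∈ R} ∈ UU i} ∈ VV j := by
      intro j hj
      have h1 : Tendsto (fun i => chiU R (a i) (b j)) atTop (𝓝 1) := by
        have := hv j; rwa [hJ₀ j hj, hL'] at this
      filter_upwards [eventually_eq_of_tendsto_01 (fun i => hval (a i) (b j)) h1] with i hi
      exact hone i j hi
    -- endgame
    have t1 : ∀ i, I₁ ≤ i →
        {b' : Y | {x : X | (x, b') ∈ R} ∈ UU i} ∉ (Filter.hyperfilter ℕ).bind VV := by
      intro i hi hc
      have h1 : {j | {b' : Y | {x : X | (x, b') ∈ R} ∈ UU i} ∈ VV j} ∈ Filter.hyperfilter ℕ :=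
        mem_ultra_bind.1 hc
      have h2 : {j | {b' : Y | {x : X | (x, b') ∈ R} ∈ UU i} ∈ VV j}ᶜ ∈ Filter.hyperfilter ℕ :=
        hWcof (by filter_upwards [hNeg i hi] with j hj using hj)
      exact Ultrafilter.compl_mem_iff_notMem.1 h2 h1
    have t2 : ∀ i, I₁ ≤ i →
        {a' : X | {y : Y | (a', y) ∈ R} ∈ (Filter.hyperfilter ℕ).bind VV} ∉ UU i :=
      fun i hi hc => t1 i hi ((SY (UU i) ((Filter.hyperfilter ℕ).bind VV)).2 hc)
    have t3 : {a' : X | {y : Y | (a', y) ∈ R} ∈ (Filter.hyperfilter ℕ).bind VV} ∉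
        (Filter.hyperfilter ℕ).bind UU := by
      intro hc
      have h1 := mem_ultra_bind.1 hc
      have h2 : {i | {a' : X | {y : Y | (a', y) ∈ R} ∈ (Filter.hyperfilter ℕ).bind VV} ∈ UU i}ᶜ ∈
          Filter.hyperfilter ℕ :=
        hWcof (by filter_upwards [eventually_ge_atTop I₁] with i hi using t2 i hi)
      exact Ultrafilter.compl_mem_iff_notMem.1 h2 h1
    have t4 : {b' : Y | {x : X | (x, b') ∈ R} ∈ (Filter.hyperfilter ℕ).bind UU} ∉
        (Filter.hyperfilter ℕ).bind VV :=
      fun hc => t3 ((SY ((Filter.hyperfilter ℕ).bind UU) ((Filter.hyperfilter ℕ).bind VV)).1 hc)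
    have t5 : {j | {b' : Y | {x : X | (x, b') ∈ R} ∈ (Filter.hyperfilter ℕ).bind UU} ∈ VV j}ᶜ ∈
        Filter.hyperfilter ℕ :=
      Ultrafilter.compl_mem_iff_notMem.2 (fun hc => t4 (mem_ultra_bind.2 hc))
    obtain ⟨j, hjmem, hjge⟩ := hWinf t5 J₀
    have t6 : {i | {a' : X | {y : Y | (a', y) ∈ R} ∈ VV j} ∈ UU i}ᶜ ∈ Filter.hyperfilter ℕ := by
      refine Ultrafilter.compl_mem_iff_notMem.2 fun hc => hjmem ?_
      exact (SY ((Filter.hyperfilter ℕ).bind UU) (VV j)).2 (mem_ultra_bind.2 hc)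
    have t7 : {i | {a' : X | {y : Y | (a', y) ∈ R} ∈ VV j} ∈ UU i} ∈ Filter.hyperfilter ℕ := by
      refine hWcof ?_
      filter_upwards [hPos j hjge] with i hi
      exact (SY (UU i) (VV j)).1 hi
    exact Ultrafilter.compl_mem_iff_notMem.1 t6 t7
  · -- L = 1, L' = 0
    obtain ⟨I₀, hI₀⟩ := eventually_atTop.1 hu1
    obtain ⟨J₀, hJ₀⟩ := eventually_atTop.1 hv1
    have hPos : ∀ i, I₀ ≤ i → (∀ᶠ j in atTop,
        {b' : Y | {x : X | (x, b') ∈ R} ∈ UU i} ∈ VV j) ∧ dSet R (a i).1 ∈ rowAlg R := by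
      intro i hi
      have h1 : Tendsto (fun j => chiU R (a i) (b j)) atTop (𝓝 1) := by
        have := hu i; rwa [hI₀ i hi, hL] at this
      have hev := eventually_eq_of_tendsto_01 (fun j => hval (a i) (b j)) h1
      obtain ⟨j₀, hj₀⟩ := hev.exists
      exact ⟨by filter_upwards [hev] with j hj using hone i j hj, hrowalg i j₀ hj₀⟩
    have hNeg : ∀ j, J₀ ≤ j → ∀ᶠ i in atTop,
        {b' : Y | {x : X | (x, b') ∈ R} ∈ UU i} ∉ VV j := by
      intro j hj
      have h0 : Tendsto (fun i => chiU R (a i) (b j)) atTop (𝓝 0) := by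
        have := hv j; rwa [hJ₀ j hj, hL'] at this
      filter_upwards [eventually_eq_of_tendsto_01 (fun i => hval (a i) (b j)) h0,
        eventually_ge_atTop I₀] with i h1 h2
      exact hzero i j h1 (hPos i h2).2
    -- endgame
    have s1 : ∀ i, I₀ ≤ i →
        {b' : Y | {x : X | (x, b') ∈ R} ∈ UU i} ∈ (Filter.hyperfilter ℕ).bind VV :=
      fun i hi => mem_ultra_bind.2 (hWcof (by filter_upwards [(hPos i hi).1] with j hj using hj))
    have s2 : ∀ i, I₀ ≤ i →
        {a' : X | {y : Y | (a', y) ∈ R} ∈ (Filter.hyperfilter ℕ).bind VV} ∈ UU i :=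
      fun i hi => (SY (UU i) ((Filter.hyperfilter ℕ).bind VV)).1 (s1 i hi)
    have s3 : {a' : X | {y : Y | (a', y) ∈ R} ∈ (Filter.hyperfilter ℕ).bind VV} ∈
        (Filter.hyperfilter ℕ).bind UU :=
      mem_ultra_bind.2 (hWcof (by
        filter_upwards [eventually_ge_atTop I₀] with i hi using s2 i hi))
    have s4 : {b' : Y | {x : X | (x, b') ∈ R} ∈ (Filter.hyperfilter ℕ).bind UU} ∈
        (Filter.hyperfilter ℕ).bind VV :=
      (SY ((Filter.hyperfilter ℕ).bind UU) ((Filter.hyperfilter ℕ).bind VV)).2 s3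
    obtain ⟨j, hjmem, hjge⟩ := hWinf (mem_ultra_bind.1 s4) J₀
    have s6 : {i | {a' : X | {y : Y | (a', y) ∈ R} ∈ VV j} ∈ UU i} ∈ Filter.hyperfilter ℕ :=
      mem_ultra_bind.1 ((SY ((Filter.hyperfilter ℕ).bind UU) (VV j)).1 hjmem)
    obtain ⟨M, hM⟩ := eventually_atTop.1 (hNeg j hjge)
    obtain ⟨i, himem, hige⟩ := hWinf s6 M
    exact hM i hige ((SY (UU i) (VV j)).2 himem)
  · exact hne (hL.trans hL'.symm)
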